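/- Let N ≥ 1, let x, η ∈ ℝ^N with ‖η‖ ≤ ‖x‖, let α ∈ ℝ^N with ‖α‖² = 2 and σ_α(y) = y − ⟨y,α⟩α, and let p ≥ 3 be a real number. Define V(y) = A(x,y,η)^{p−2} A(x,σ_α(y),η)^{p−2} ( A(x,y,η)^{p−2} + A(x,σ_α(y),η)^{p−2} ). Then there is a constant C, depending only on p and N, such that for every y ∈ ℝ^N with A := A(x,y,η) > 0 and A_α := A(x,σ_α(y),η) > 0, and every direction vector v ∈ ℝ^N, the directional derivative ∂_v V(y) satisfies |∂_v V(y)| / V(y)² ≤ C ‖v‖ / ( A^{p−1} A_α^{p−1} ( A^{p−3} + A_α^{p−3} ) ). -/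

import Mathlib

open Set

/-- `A(x,y,η) = √(‖x‖² + ‖y‖² − 2⟨y,η⟩)`, viewed as a function of `y`. -/
noncomputable def Afun (N : ℕ) (x η y : EuclideanSpace ℝ (Fin N)) : ℝ :=
  Real.sqrt (‖x‖ ^ 2 + ‖y‖ ^ 2 - 2 * (inner ℝ y η : ℝ))

/-- The function `V(y) = A(x,y,η)^{p−2} A(x,σ_α(y),η)^{p−2}
(A(x,y,η)^{p−2} + A(x,σ_α(y),η)^{p−2})`, where `σ_α(y) = y − ⟨y,α⟩α`. -/
noncomputable def Vfun (N : ℕ) (x η α : EuclideanSpace ℝ (Fin N)) (p : ℝ)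
    (y : EuclideanSpace ℝ (Fin N)) : ℝ :=
  Afun N x η y ^ (p - 2) * Afun N x η (y - (inner ℝ y α : ℝ) • α) ^ (p - 2) *
    (Afun N x η y ^ (p - 2) + Afun N x η (y - (inner ℝ y α : ℝ) • α) ^ (p - 2))

variable {N : ℕ} {x η : EuclideanSpace ℝ (Fin N)}

lemma norm_sub_le_afun (hx : ‖η‖ ≤ ‖x‖) (y : EuclideanSpace ℝ (Fin N)) :
    ‖y - η‖ ≤ Afun N x η y := by
  have h1 : ‖y - η‖ ^ 2 ≤ ‖x‖ ^ 2 + ‖y‖ ^ 2 - 2 * (inner ℝ y η : ℝ) := by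
    rw [norm_sub_sq_real]
    have : ‖η‖ ^ 2 ≤ ‖x‖ ^ 2 := by
      have := norm_nonneg η
      nlinarith
    linarith
  calc ‖y - η‖ = Real.sqrt (‖y - η‖ ^ 2) := (Real.sqrt_sq (norm_nonneg _)).symm
    _ ≤ Afun N x η y := Real.sqrt_le_sqrt h1

lemma afun_hasFDerivAt (hx : ‖η‖ ≤ ‖x‖) {y : EuclideanSpace ℝ (Fin N)}
    (h : 0 < Afun N x η y) :
    ∃ D : EuclideanSpace ℝ (Fin N) →L[ℝ] ℝ, HasFDerivAt (Afun N x η) D y ∧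
      ∀ v, |D v| ≤ ‖v‖ := by
  have harg : 0 < ‖x‖ ^ 2 + ‖y‖ ^ 2 - 2 * (inner ℝ y η : ℝ) := Real.sqrt_pos.mp h
  have h1 : HasFDerivAt (fun z : EuclideanSpace ℝ (Fin N) => ‖z‖ ^ 2)
      (2 • innerSL ℝ y) y := (hasStrictFDerivAt_norm_sq y).hasFDerivAt
  have h2 : HasFDerivAt (fun z : EuclideanSpace ℝ (Fin N) => (inner ℝ z η : ℝ))
      (innerSL ℝ η) y := by
    have e : (fun z : EuclideanSpace ℝ (Fin N) => (inner ℝ z η : ℝ))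
        = fun z => innerSL ℝ η z := funext fun z => by
      simp [real_inner_comm z η]
    rw [e]; exact (innerSL ℝ η).hasFDerivAt
  have hg : HasFDerivAt
      (fun z : EuclideanSpace ℝ (Fin N) => ‖x‖ ^ 2 + ‖z‖ ^ 2 - 2 * (inner ℝ z η : ℝ))
      ((2 • innerSL ℝ y : _ →L[ℝ] ℝ) - (2 : ℝ) • innerSL ℝ η) y :=
    (h1.const_add (‖x‖ ^ 2)).sub (h2.const_mul 2)
  have hAd := hg.sqrt harg.ne'
  refine ⟨_, hAd, fun v => ?_⟩
  have happ : (((1 / (2 * Real.sqrt (‖x‖ ^ 2 + ‖y‖ ^ 2 - 2 * (inner ℝ y η : ℝ)))) •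
      ((2 • innerSL ℝ y : _ →L[ℝ] ℝ) - (2 : ℝ) • innerSL ℝ η) :
        EuclideanSpace ℝ (Fin N) →L[ℝ] ℝ)) v
      = (inner ℝ (y - η) v : ℝ) / Afun N x η y := by
    simp only [ContinuousLinearMap.coe_smul', Pi.smul_apply,
      ContinuousLinearMap.sub_apply, ContinuousLinearMap.smul_apply,
      innerSL_apply_apply, smul_eq_mul, inner_sub_left, Afun]
    have hs : Real.sqrt (‖x‖ ^ 2 + ‖y‖ ^ 2 - 2 * (inner ℝ y η : ℝ)) ≠ 0 := by
      rw [← Afun]; exact h.ne'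
    field_simp
    ring
  rw [happ, abs_div, abs_of_nonneg (le_of_lt h : (0:ℝ) ≤ Afun N x η y),
    div_le_iff₀ h]
  calc |(inner ℝ (y - η) v : ℝ)| ≤ ‖y - η‖ * ‖v‖ := abs_real_inner_le_norm _ _
    _ ≤ Afun N x η y * ‖v‖ := by
        have := norm_sub_le_afun hx y
        have := norm_nonneg v
        nlinarith
    _ = ‖v‖ * Afun N x η y := by ring


variable {N : ℕ}

noncomputable def refl0 (N : ℕ) (α : EuclideanSpace ℝ (Fin N)) :
    EuclideanSpace ℝ (Fin N) →L[ℝ] EuclideanSpace ℝ (Fin N) :=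
  ContinuousLinearMap.id ℝ _ - (innerSL ℝ α).smulRight α

lemma refl0_apply (α z : EuclideanSpace ℝ (Fin N)) :
    refl0 N α z = z - (inner ℝ z α : ℝ) • α := by
  simp [refl0, real_inner_comm z α]

lemma refl0_norm {α : EuclideanSpace ℝ (Fin N)} (hα : (inner ℝ α α : ℝ) = 2)
    (z : EuclideanSpace ℝ (Fin N)) : ‖refl0 N α z‖ = ‖z‖ := by
  have h2 : ‖refl0 N α z‖ ^ 2 = ‖z‖ ^ 2 := by
    rw [refl0_apply, norm_sub_sq_real, inner_smul_right, norm_smul,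
      real_inner_comm α z]
    have hn : ‖α‖ ^ 2 = 2 := by rw [← real_inner_self_eq_norm_sq]; exact hα
    rw [mul_pow, hn]
    rw [Real.norm_eq_abs, sq_abs]
    ring
  calc ‖refl0 N α z‖ = Real.sqrt (‖refl0 N α z‖ ^ 2) := (Real.sqrt_sq (norm_nonneg _)).symm
    _ = Real.sqrt (‖z‖ ^ 2) := by rw [h2]
    _ = ‖z‖ := Real.sqrt_sq (norm_nonneg _)

lemma abs_comb (fa gb c d M1 M2 : ℝ) (hfa : 0 ≤ fa) (hgb : 0 ≤ gb)
    (hc : |c| ≤ M1) (hd : |d| ≤ M2) :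
    |fa * gb * (c + d) + (fa + gb) * (fa * d + gb * c)| ≤
      fa * gb * (M1 + M2) + (fa + gb) * (fa * M2 + gb * M1) := by
  have h1 := abs_le.mp hc
  have h2 := abs_le.mp hd
  rw [abs_le]
  constructor <;>
    nlinarith [mul_nonneg hfa hgb, mul_nonneg hfa hfa, mul_nonneg hgb hgb,
      mul_le_mul_of_nonneg_left h1.2 (mul_nonneg hfa hgb),
      mul_le_mul_of_nonneg_left (neg_le.mp (neg_le_neg h1.1)) (mul_nonneg hfa hgb),
      mul_le_mul_of_nonneg_left h2.2 (mul_nonneg hfa hgb),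
      mul_le_mul_of_nonneg_left h1.2 (mul_nonneg hgb hgb),
      mul_le_mul_of_nonneg_left h2.2 (mul_nonneg hfa hfa),
      mul_le_mul_of_nonneg_left (le_of_abs_le hc) (mul_nonneg hfa hgb)]

lemma key_alg (a b u w : ℝ) (ha : 0 < a) (hb : 0 < b) (hu : 0 < u) (hw : 0 < w)
    (h1 : b * u ≤ u * a + w * b) (h2 : a * w ≤ u * a + w * b) :
    ((u * a) * (w * b) * (u + w) +
        ((u * a) + (w * b)) * ((u * a) * w + (w * b) * u)) *
      ((u * a ^ 2) * (w * b ^ 2) * (u + w)) ≤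
      8 * ((u * a) * (w * b) * ((u * a) + (w * b))) ^ 2 := by
  set P := u * a + w * b with hP
  have hPpos : 0 < P := by positivity
  have hA3 : a * (u + w) ≤ 2 * P := by nlinarith
  have hB3 : b * (u + w) ≤ 2 * P := by nlinarith
  have e1 : ((u * a) * (w * b) * (u + w) +
        ((u * a) + (w * b)) * ((u * a) * w + (w * b) * u)) *
      ((u * a ^ 2) * (w * b ^ 2) * (u + w)) =
      (u * a) ^ 2 * (w * b) ^ 2 *
        ((a * (u + w)) * (b * (u + w)) + P * (a * (u + w)) + P * (b * (u + w))) := by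
    rw [hP]; ring
  have e2 : 8 * ((u * a) * (w * b) * ((u * a) + (w * b))) ^ 2 =
      (u * a) ^ 2 * (w * b) ^ 2 * (8 * P ^ 2) := by rw [hP]; ring
  rw [e1, e2]
  have hin : (a * (u + w)) * (b * (u + w)) + P * (a * (u + w)) + P * (b * (u + w)) ≤
      8 * P ^ 2 := by
    nlinarith [mul_le_mul hA3 hB3 (by positivity) (by positivity),
      mul_le_mul_of_nonneg_left hA3 hPpos.le, mul_le_mul_of_nonneg_left hB3 hPpos.le]
  have : (0:ℝ) ≤ (u * a) ^ 2 * (w * b) ^ 2 := by positivity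
  exact mul_le_mul_of_nonneg_left hin this



set_option maxHeartbeats 1000000 in
/-- for `p ≥ 3` there is a constant `C`, depending only on `p` and `N`,
such that whenever `‖η‖ ≤ ‖x‖`, `‖α‖² = 2`, `A := A(x,y,η) > 0` and
`A_α := A(x,σ_α(y),η) > 0`, every directional derivative of `V` satisfies
`|∂_v V(y)| / V(y)² ≤ C ‖v‖ / (A^{p−1} A_α^{p−1} (A^{p−3} + A_α^{p−3}))`. -/
theorem deriv_V_quotient_bound
    (N : ℕ) (hN : 1 ≤ N) (p : ℝ) (hp : 3 ≤ p) :
    ∃ C : ℝ, ∀ x η : EuclideanSpace ℝ (Fin N), ‖η‖ ≤ ‖x‖ →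
      ∀ α : EuclideanSpace ℝ (Fin N), (inner ℝ α α : ℝ) = 2 →
      ∀ y : EuclideanSpace ℝ (Fin N),
        0 < Afun N x η y → 0 < Afun N x η (y - (inner ℝ y α : ℝ) • α) →
      ∀ v : EuclideanSpace ℝ (Fin N),
        |fderiv ℝ (Vfun N x η α p) y v| / (Vfun N x η α p y) ^ 2 ≤
          C * ‖v‖ /
            (Afun N x η y ^ (p - 1) *
              Afun N x η (y - (inner ℝ y α : ℝ) • α) ^ (p - 1) *
              (Afun N x η y ^ (p - 3) +
                Afun N x η (y - (inner ℝ y α : ℝ) • α) ^ (p - 3))) := by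
  refine ⟨8 * (p - 2), ?_⟩
  intro x η hx α hα y hA hAl v
  have hLy : refl0 N α y = y - (inner ℝ y α : ℝ) • α := refl0_apply α y
  rw [← hLy]
  obtain ⟨Da, hDa, hDab⟩ := afun_hasFDerivAt hx hA
  have hAl' : 0 < Afun N x η (refl0 N α y) := by rwa [hLy]
  obtain ⟨Db, hDb, hDbb⟩ := afun_hasFDerivAt hx hAl'
  have hGraw : HasFDerivAt (fun z => Afun N x η (refl0 N α z))
      (Db.comp (refl0 N α)) y := hDb.comp y (refl0 N α).hasFDerivAt
  have hp2 : (1:ℝ) ≤ p - 2 := by linarith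
  have hF := hDa.rpow_const (p := p - 2) (Or.inr hp2)
  have hG : HasFDerivAt (fun z : EuclideanSpace ℝ (Fin N) =>
      Afun N x η (z - (inner ℝ z α : ℝ) • α) ^ (p - 2))
      (((p - 2) * Afun N x η (refl0 N α y) ^ (p - 2 - 1)) •
        (Db.comp (refl0 N α))) y := by
    have e : (fun z : EuclideanSpace ℝ (Fin N) =>
        Afun N x η (z - (inner ℝ z α : ℝ) • α) ^ (p - 2)) =
        fun z => Afun N x η (refl0 N α z) ^ (p - 2) :=
      funext fun z => by rw [refl0_apply]
    rw [e]; exact hGraw.rpow_const (Or.inr hp2)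
  have hV : HasFDerivAt (Vfun N x η α p)
      (((fun z => Afun N x η z ^ (p - 2)) y *
          (fun z : EuclideanSpace ℝ (Fin N) =>
            Afun N x η (z - (inner ℝ z α : ℝ) • α) ^ (p - 2)) y) •
          (((p - 2) * Afun N x η y ^ (p - 2 - 1)) • Da +
            ((p - 2) * Afun N x η (refl0 N α y) ^ (p - 2 - 1)) •
              (Db.comp (refl0 N α))) +
        ((fun z => Afun N x η z ^ (p - 2)) y +
          (fun z : EuclideanSpace ℝ (Fin N) =>
            Afun N x η (z - (inner ℝ z α : ℝ) • α) ^ (p - 2)) y) •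
          ((fun z => Afun N x η z ^ (p - 2)) y •
              (((p - 2) * Afun N x η (refl0 N α y) ^ (p - 2 - 1)) •
                (Db.comp (refl0 N α))) +
            (fun z : EuclideanSpace ℝ (Fin N) =>
              Afun N x η (z - (inner ℝ z α : ℝ) • α) ^ (p - 2)) y •
              (((p - 2) * Afun N x η y ^ (p - 2 - 1)) • Da))) y :=
    (hF.mul hG).mul (hF.add hG)
  rw [hV.fderiv]
  simp only [ContinuousLinearMap.add_apply, ContinuousLinearMap.smul_apply,
    ContinuousLinearMap.comp_apply, smul_eq_mul]
  rw [← hLy, show p - 2 - 1 = p - 3 from by ring]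
  set a := Afun N x η y with ha_def
  set b := Afun N x η (refl0 N α y) with hb_def
  set u := a ^ (p - 3) with hu_def
  set w := b ^ (p - 3) with hw_def
  set fa := a ^ (p - 2) with hfa_def
  set gb := b ^ (p - 2) with hgb_def
  clear_value u w fa gb a b
  have hfa : 0 < fa := by rw [hfa_def]; exact Real.rpow_pos_of_pos hA _
  have hgb : 0 < gb := by rw [hgb_def]; exact Real.rpow_pos_of_pos hAl' _
  have hu : 0 < u := by rw [hu_def]; exact Real.rpow_pos_of_pos hA _
  have hw : 0 < w := by rw [hw_def]; exact Real.rpow_pos_of_pos hAl' _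
  have hs : 0 < p - 2 := by linarith
  have hc : |(p - 2) * u * Da v| ≤ (p - 2) * u * ‖v‖ := by
    rw [abs_mul, abs_of_nonneg (by positivity : (0:ℝ) ≤ (p - 2) * u)]
    exact mul_le_mul_of_nonneg_left (hDab v) (by positivity)
  have hd : |(p - 2) * w * Db ((refl0 N α) v)| ≤ (p - 2) * w * ‖v‖ := by
    rw [abs_mul, abs_of_nonneg (by positivity : (0:ℝ) ≤ (p - 2) * w)]
    refine le_trans (mul_le_mul_of_nonneg_left (hDbb _) (by positivity)) ?_
    rw [refl0_norm hα]
  have habs := abs_comb fa gb _ _ _ _ hfa.le hgb.le hc hd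
  have hXb := habs.trans (le_of_eq (show
      fa * gb * ((p - 2) * u * ‖v‖ + (p - 2) * w * ‖v‖) +
        (fa + gb) * (fa * ((p - 2) * w * ‖v‖) + gb * ((p - 2) * u * ‖v‖)) =
      (p - 2) * ‖v‖ * (fa * gb * (u + w) + (fa + gb) * (fa * w + gb * u))
      from by ring))
  have hVv : Vfun N x η α p y = fa * gb * (fa + gb) := by
    rw [Vfun, ← hLy, ← ha_def, ← hb_def, ← hfa_def, ← hgb_def]
  have hV2 : 0 < Vfun N x η α p y ^ 2 := by rw [hVv]; positivity
  have hden : 0 < a ^ (p - 1) * b ^ (p - 1) * (u + w) := by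
    have h1 := Real.rpow_pos_of_pos hA (p - 1)
    have h2 := Real.rpow_pos_of_pos hAl' (p - 1)
    positivity
  rw [div_le_div_iff₀ hV2 hden]
  have efa : fa = u * a := by
    rw [hfa_def, hu_def, show p - 2 = p - 3 + 1 from by ring, Real.rpow_add_one hA.ne']
  have egb : gb = w * b := by
    rw [hgb_def, hw_def, show p - 2 = p - 3 + 1 from by ring, Real.rpow_add_one hAl'.ne']
  have ea1 : a ^ (p - 1) = u * a ^ 2 := by
    rw [hu_def, show p - 1 = p - 3 + 2 from by ring, Real.rpow_add hA, Real.rpow_two]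
  have eb1 : b ^ (p - 1) = w * b ^ 2 := by
    rw [hw_def, show p - 1 = p - 3 + 2 from by ring, Real.rpow_add hAl', Real.rpow_two]
  have h1 : b * u ≤ u * a + w * b := by
    rcases le_total a b with hab | hab
    · have huw : u ≤ w := by
        rw [hu_def, hw_def]; exact Real.rpow_le_rpow hA.le hab (by linarith)
      nlinarith
    · nlinarith
  have h2 : a * w ≤ u * a + w * b := by
    rcases le_total b a with hab | hab
    · have huw : w ≤ u := by
        rw [hu_def, hw_def]; exact Real.rpow_le_rpow hAl'.le hab (by linarith)
      nlinarith
    · nlinarith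
  have hTD := key_alg a b u w hA hAl' hu hw h1 h2
  rw [← efa, ← egb] at hTD
  rw [hVv, ea1, eb1]
  have hDnn : (0:ℝ) ≤ u * a ^ 2 * (w * b ^ 2) * (u + w) := by positivity
  have hnn : (0:ℝ) ≤ (p - 2) * ‖v‖ := by positivity
  have step1 := mul_le_mul_of_nonneg_right hXb hDnn
  have step2 := mul_le_mul_of_nonneg_left hTD hnn
  linarith [step1, step2]
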